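/- Let f and g be circle endomorphisms of degree d ≥ 2 such that the maximal diameters ε_{n,f} and ε_{n,g} of the intervals in their n-th Markov partitions tend to zero as n → ∞. Then f and g are topologically conjugate: there exists a homeomorphism h of the circle with f ∘ h = h ∘ g. -/

import Mathlib

open Set Filter Function

/-- The composition `g_{i₀} ∘ g_{i₁} ∘ ⋯ ∘ g_{i_{n-1}}` of inverse branches
`g_i(x) = F⁻¹(x + i)` along the word `w = [i₀, …, i_{n-1}]`. -/
def branchComp (d : ℕ) (Finv : ℝ → ℝ) (w : List (Fin d)) : ℝ → ℝ :=
  w.foldr (fun i f => (fun x => Finv (x + (i : ℝ))) ∘ f) id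

/-- The interval `I_w = g_{i₀} ∘ ⋯ ∘ g_{i_{n-1}}([0,1])` of the Markov partition. -/
def cylInterval (d : ℕ) (Finv : ℝ → ℝ) (w : List (Fin d)) : Set ℝ :=
  branchComp d Finv w '' Set.Icc 0 1

section Aux

variable {d : ℕ} {F Finv : ℝ → ℝ}

/-- periodicity for integer shifts -/
lemma per_int (hFper : ∀ x, F (x + 1) = F x + d) :
    ∀ (k : ℤ) (x : ℝ), F (x + k) = F x + d * k := by
  have hneg : ∀ x : ℝ, F (x - 1) = F x - d := by
    intro x
    have := hFper (x - 1)
    simp at this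
    linarith
  intro k
  induction k using Int.induction_on with
  | zero => simp
  | succ n ih =>
    intro x
    have h1 : (x + ((n : ℤ) + 1 : ℤ) : ℝ) = (x + (n : ℤ)) + 1 := by push_cast; ring
    rw [h1, hFper, ih]
    push_cast; ring
  | pred n ih =>
    intro x
    have h1 : (x + (-(n : ℤ) - 1 : ℤ) : ℝ) = (x + (-(n : ℤ) : ℤ)) - 1 := by push_cast; ring
    rw [h1, hneg, ih]
    push_cast; ring

lemma F_int (hFper : ∀ x, F (x + 1) = F x + d) (hF0 : F 0 = 0) (k : ℤ) :
    F (k : ℝ) = d * k := by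
  have := per_int hFper k 0
  simpa [hF0] using this

lemma Finv_per (hFper : ∀ x, F (x + 1) = F x + d)
    (hFinv₁ : ∀ x, Finv (F x) = x) (hFinv₂ : ∀ x, F (Finv x) = x)
    (k : ℤ) (x : ℝ) : Finv (x + d * k) = Finv x + k := by
  have h : F (Finv x + k) = x + d * k := by
    rw [per_int hFper k (Finv x), hFinv₂]
  rw [← h, hFinv₁]

lemma Finv_zero (hF0 : F 0 = 0) (hFinv₁ : ∀ x, Finv (F x) = x) : Finv 0 = 0 := by
  have := hFinv₁ 0
  rwa [hF0] at this

lemma Finv_int_mul (hFper : ∀ x, F (x + 1) = F x + d) (hF0 : F 0 = 0)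
    (hFinv₁ : ∀ x, Finv (F x) = x) (hFinv₂ : ∀ x, F (Finv x) = x) (k : ℤ) :
    Finv ((d : ℝ) * k) = (k : ℝ) := by
  have := Finv_per hFper hFinv₁ hFinv₂ k 0
  simpa [Finv_zero hF0 hFinv₁] using this

lemma Finv_strictMono (hFmono : StrictMono F) (hFinv₂ : ∀ x, F (Finv x) = x) :
    StrictMono Finv := by
  intro a b hab
  by_contra h
  push_neg at h
  have := hFmono.monotone h
  rw [hFinv₂, hFinv₂] at this
  exact absurd hab (not_lt.mpr this)

/-- iterate of G on integers -/
lemma iter_int (hGper : ∀ x, F (x + 1) = F x + d) (hG0 : F 0 = 0) :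
    ∀ (n : ℕ) (k : ℤ), F^[n] (k : ℝ) = (d : ℝ) ^ n * k := by
  intro n
  induction n with
  | zero => simp
  | succ n ih =>
    intro k
    rw [Function.iterate_succ_apply]
    have h1 : F (k : ℝ) = ((d * k : ℤ) : ℝ) := by
      push_cast
      exact F_int hGper hG0 k
    rw [h1, ih (d * k)]
    push_cast; ring

lemma iter_Finv_int (hFper : ∀ x, F (x + 1) = F x + d) (hF0 : F 0 = 0)
    (hFinv₁ : ∀ x, Finv (F x) = x) (hFinv₂ : ∀ x, F (Finv x) = x) :
    ∀ (n : ℕ) (k : ℤ), Finv^[n] (((d : ℝ) ^ n) * k) = (k : ℝ) := by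
  intro n
  induction n with
  | zero => simp
  | succ n ih =>
    intro k
    rw [Function.iterate_succ_apply]
    have h1 : ((d : ℝ) ^ (n + 1)) * k = (d : ℝ) * (((d : ℤ) ^ n * k : ℤ) : ℝ) := by
      push_cast; ring
    rw [h1, Finv_int_mul hFper hF0 hFinv₁ hFinv₂,
      show (((d : ℤ) ^ n * k : ℤ) : ℝ) = (d : ℝ) ^ n * (k : ℝ) by push_cast; ring, ih k]

lemma iter_per (hGper : ∀ x, F (x + 1) = F x + d) :
    ∀ (n : ℕ) (x : ℝ), F^[n] (x + 1) = F^[n] x + (d : ℝ) ^ n := by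
  intro n
  induction n with
  | zero => simp
  | succ n ih =>
    intro x
    rw [Function.iterate_succ_apply', ih, Function.iterate_succ_apply']
    have := per_int hGper ((d : ℤ) ^ n) (F^[n] x)
    push_cast at this ⊢
    rw [this]
    ring

lemma iter_Finv_per (hFper : ∀ x, F (x + 1) = F x + d)
    (hFinv₁ : ∀ x, Finv (F x) = x) (hFinv₂ : ∀ x, F (Finv x) = x) :
    ∀ (n : ℕ) (y : ℝ), Finv^[n] (y + (d : ℝ) ^ n) = Finv^[n] y + 1 := by
  intro n
  induction n with
  | zero => simp
  | succ n ih =>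
    intro y
    rw [Function.iterate_succ_apply, Function.iterate_succ_apply]
    have h1 : y + (d : ℝ) ^ (n + 1) = y + (d : ℝ) * ((d : ℤ) ^ n : ℤ) := by
      push_cast; ring
    rw [h1, Finv_per hFper hFinv₁ hFinv₂]
    have : Finv y + ((d : ℤ) ^ n : ℤ) = Finv y + (d : ℝ) ^ n := by push_cast; ring
    rw [this, ih]

/-- Lemma A: the image of `[k, k+1]` under `Finv^[n]` is contained in an integer
translate of a cylinder interval of length `n`. -/
lemma cyl_lemma (hd : 2 ≤ d) (hFper : ∀ x, F (x + 1) = F x + d)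
    (hFinv₁ : ∀ x, Finv (F x) = x) (hFinv₂ : ∀ x, F (Finv x) = x)
    (n : ℕ) (k : ℤ) :
    ∃ (w : List (Fin d)) (m : ℤ), w.length = n ∧
      ∀ y ∈ Set.Icc (k : ℝ) (k + 1), Finv^[n] y - m ∈ cylInterval d Finv w := by
  induction n with
  | zero =>
    refine ⟨[], k, rfl, fun y hy => ?_⟩
    refine ⟨y - k, ⟨by linarith [hy.1], by linarith [hy.2]⟩, ?_⟩
    simp [branchComp]
  | succ n ih =>
    obtain ⟨w, m, hlen, hmem⟩ := ih
    have hd0 : (0 : ℤ) < d := by omega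
    set r : ℤ := m % d with hr
    set q : ℤ := m / d with hq
    have hr0 : 0 ≤ r := Int.emod_nonneg m (by omega)
    have hrd : r < d := Int.emod_lt_of_pos m hd0
    have hrd' : r.toNat < d := by omega
    refine ⟨⟨r.toNat, hrd'⟩ :: w, q, by simp [hlen], fun y hy => ?_⟩
    obtain ⟨t, ht, hbt⟩ := hmem y hy
    have hFy : Finv^[n] y = branchComp d Finv w t + m := by linarith [hbt ▸ (rfl : branchComp d Finv w t = branchComp d Finv w t)]
    refine ⟨t, ht, ?_⟩
    have hsplit : (m : ℝ) = (r : ℝ) + (d : ℝ) * q := by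
      have : (d : ℤ) * q + r = m := Int.mul_ediv_add_emod m d
      push_cast [← this]; ring
    have hcast : ((⟨r.toNat, hrd'⟩ : Fin d) : ℝ) = (r : ℝ) := by
      have h := Int.toNat_of_nonneg hr0
      exact_mod_cast congrArg (fun z : ℤ => (z : ℝ)) h
    have hb : branchComp d Finv (⟨r.toNat, hrd'⟩ :: w) t
        = Finv (branchComp d Finv w t + r) := by
      simp [branchComp, hcast]
    rw [hb]
    rw [Function.iterate_succ_apply', hFy, hsplit, show branchComp d Finv w t + ((r : ℝ) + (d : ℝ) * q) = (branchComp d Finv w t + r) + (d : ℝ) * q by ring,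
      Finv_per hFper hFinv₁ hFinv₂]
    ring

/-- Lemma C : `Finv^[n] (G^[n] y)` stays in `[⌊y⌋, ⌊y⌋+1]`. -/
lemma sandwich {G : ℝ → ℝ} (hFper : ∀ x, F (x + 1) = F x + d) (hF0 : F 0 = 0)
    (hFmono : StrictMono F)
    (hFinv₁ : ∀ x, Finv (F x) = x) (hFinv₂ : ∀ x, F (Finv x) = x)
    (hGper : ∀ x, G (x + 1) = G x + d) (hG0 : G 0 = 0) (hGmono : StrictMono G)
    (n : ℕ) (y : ℝ) :
    Finv^[n] (G^[n] y) ∈ Set.Icc ((⌊y⌋ : ℝ)) ((⌊y⌋ : ℝ) + 1) := by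
  set k : ℤ := ⌊y⌋
  have h1 : G^[n] ((k : ℝ)) ≤ G^[n] y := (hGmono.iterate n).monotone (Int.floor_le y)
  have h2 : G^[n] y ≤ G^[n] ((k : ℝ) + 1) :=
    (hGmono.iterate n).monotone (le_of_lt (Int.lt_floor_add_one y))
  have hk : G^[n] ((k : ℝ)) = (d : ℝ) ^ n * k := iter_int hGper hG0 n k
  have hk1 : G^[n] ((k : ℝ) + 1) = (d : ℝ) ^ n * (k + 1) := by
    have : ((k : ℝ) + 1) = ((k + 1 : ℤ) : ℝ) := by push_cast; ring
    rw [this, iter_int hGper hG0 n (k + 1)]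
  have hmonoI : Monotone (Finv^[n]) :=
    ((Finv_strictMono hFmono hFinv₂).iterate n).monotone
  constructor
  · have := hmonoI (hk ▸ h1)
    rwa [show (d:ℝ)^n * k = (d:ℝ)^n * (k:ℤ) by norm_cast,
      iter_Finv_int hFper hF0 hFinv₁ hFinv₂ n k] at this
  · have := hmonoI (hk1 ▸ h2)
    rwa [show (d:ℝ)^n * ((k : ℝ) + 1) = (d:ℝ)^n * ((k + 1 : ℤ) : ℝ) by push_cast; ring,
      iter_Finv_int hFper hF0 hFinv₁ hFinv₂ n (k + 1), show ((k + 1 : ℤ) : ℝ) = (k : ℝ) + 1 by push_cast; ring] at this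

/-- the sequence `x ↦ Finv^[n] (G^[n] x)` converges uniformly. -/
lemma conj_exists {G : ℝ → ℝ} (hd : 2 ≤ d)
    (hFper : ∀ x, F (x + 1) = F x + d) (hF0 : F 0 = 0) (hFmono : StrictMono F)
    (hFinv₁ : ∀ x, Finv (F x) = x) (hFinv₂ : ∀ x, F (Finv x) = x)
    (hGper : ∀ x, G (x + 1) = G x + d) (hG0 : G 0 = 0) (hGmono : StrictMono G)
    (hεF : ∀ ε > (0 : ℝ), ∃ N : ℕ, ∀ n ≥ N, ∀ w : List (Fin d), w.length = n →
      ∀ x ∈ cylInterval d Finv w, ∀ y ∈ cylInterval d Finv w, |x - y| < ε) :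
    ∃ H : ℝ → ℝ, TendstoUniformly (fun n x => Finv^[n] (G^[n] x)) H atTop := by
  -- key Cauchy estimate
  have key : ∀ ε > (0 : ℝ), ∃ N : ℕ, ∀ m ≥ N, ∀ n ≥ N, ∀ x : ℝ,
      |Finv^[m] (G^[m] x) - Finv^[n] (G^[n] x)| < ε := by
    intro ε hε
    obtain ⟨N, hN⟩ := hεF ε hε
    refine ⟨N, ?_⟩
    have core : ∀ m n, N ≤ n → n ≤ m → ∀ x : ℝ,
        |Finv^[m] (G^[m] x) - Finv^[n] (G^[n] x)| < ε := by
      intro m n hNn hnm x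
      obtain ⟨j, rfl⟩ : ∃ j, m = n + j := ⟨m - n, by omega⟩
      set k : ℤ := ⌊G^[n] x⌋ with hk
      have hy₁ : G^[n] x ∈ Set.Icc (k : ℝ) ((k : ℝ) + 1) :=
        ⟨Int.floor_le _, le_of_lt (Int.lt_floor_add_one _)⟩
      have hy₂ : Finv^[j] (G^[j] (G^[n] x)) ∈ Set.Icc (k : ℝ) ((k : ℝ) + 1) :=
        sandwich hFper hF0 hFmono hFinv₁ hFinv₂ hGper hG0 hGmono j (G^[n] x)
      have hFm : Finv^[n + j] (G^[n + j] x) = Finv^[n] (Finv^[j] (G^[j] (G^[n] x))) := by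
        have e1 : Finv^[n] (Finv^[j] (G^[j] (G^[n] x))) = Finv^[n + j] (G^[j] (G^[n] x)) :=
          (Function.iterate_add_apply Finv n j _).symm
        have e2 : G^[n + j] x = G^[j] (G^[n] x) := by
          rw [Nat.add_comm]; exact Function.iterate_add_apply G j n x
        rw [e2, e1]
      obtain ⟨w, mm, hlen, hmem⟩ := cyl_lemma hd hFper hFinv₁ hFinv₂ n k
      have h1 := hmem _ hy₁
      have h2 := hmem _ hy₂
      have := hN n hNn w hlen _ h2 _ h1
      rw [hFm]
      have heq : Finv^[n] (Finv^[j] (G^[j] (G^[n] x))) - (mm : ℝ) - (Finv^[n] (G^[n] x) - mm)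
          = Finv^[n] (Finv^[j] (G^[j] (G^[n] x))) - Finv^[n] (G^[n] x) := by ring
      rwa [heq] at this
    intro m hm n hn x
    rcases le_total n m with h | h
    · exact core m n hn h x
    · rw [abs_sub_comm]; exact core n m hm h x
  -- uniform Cauchy
  have ucauchy : UniformCauchySeqOn (fun n x => Finv^[n] (G^[n] x)) atTop Set.univ := by
    rw [Metric.uniformCauchySeqOn_iff]
    intro ε hε
    obtain ⟨N, hN⟩ := key ε hε
    exact ⟨N, fun m hm n hn x _ => by simpa [Real.dist_eq] using hN m hm n hn x⟩
  -- pointwise convergence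
  have hc : ∀ x : ℝ, CauchySeq (fun n => Finv^[n] (G^[n] x)) := by
    intro x
    rw [Metric.cauchySeq_iff]
    intro ε hε
    obtain ⟨N, hN⟩ := key ε hε
    exact ⟨N, fun m hm n hn => by simpa [Real.dist_eq] using hN m hm n hn x⟩
  choose H hH using fun x => cauchySeq_tendsto_of_complete (hc x)
  refine ⟨H, ?_⟩
  have := ucauchy.tendstoUniformlyOn_of_tendsto (fun x _ => hH x)
  rwa [tendstoUniformlyOn_univ] at this

end Aux

/-- two circle endomorphisms of the same degree `d ≥ 2` whose Markov
partitions have maximal diameters tending to zero are topologically conjugate. -/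
theorem stmt_2 (d : ℕ) (hd : 2 ≤ d)
    (F Finv G Ginv : ℝ → ℝ)
    (hFcont : Continuous F) (hFmono : StrictMono F) (hFbij : Function.Bijective F)
    (hFper : ∀ x, F (x + 1) = F x + d) (hF0 : F 0 = 0)
    (hFinv₁ : ∀ x, Finv (F x) = x) (hFinv₂ : ∀ x, F (Finv x) = x)
    (hGcont : Continuous G) (hGmono : StrictMono G) (hGbij : Function.Bijective G)
    (hGper : ∀ x, G (x + 1) = G x + d) (hG0 : G 0 = 0)
    (hGinv₁ : ∀ x, Ginv (G x) = x) (hGinv₂ : ∀ x, G (Ginv x) = x)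
    (hεF : ∀ ε > (0 : ℝ), ∃ N : ℕ, ∀ n ≥ N, ∀ w : List (Fin d), w.length = n →
      ∀ x ∈ cylInterval d Finv w, ∀ y ∈ cylInterval d Finv w, |x - y| < ε)
    (hεG : ∀ ε > (0 : ℝ), ∃ N : ℕ, ∀ n ≥ N, ∀ w : List (Fin d), w.length = n →
      ∀ x ∈ cylInterval d Ginv w, ∀ y ∈ cylInterval d Ginv w, |x - y| < ε) :
    ∃ H : ℝ → ℝ, Continuous H ∧ StrictMono H ∧ Function.Bijective H ∧
      (∀ x, H (x + 1) = H x + 1) ∧ ∀ x, F (H x) = H (G x) := by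
  obtain ⟨H, hHu⟩ := conj_exists hd hFper hF0 hFmono hFinv₁ hFinv₂ hGper hG0 hGmono hεF
  obtain ⟨K, hKu⟩ := conj_exists hd hGper hG0 hGmono hGinv₁ hGinv₂ hFper hF0 hFmono hεG
  have hH : ∀ x, Tendsto (fun n => Finv^[n] (G^[n] x)) atTop (nhds (H x)) :=
    fun x => hHu.tendsto_at x
  have hK : ∀ x, Tendsto (fun n => Ginv^[n] (F^[n] x)) atTop (nhds (K x)) :=
    fun x => hKu.tendsto_at x
  -- continuity of Finv
  have hFinvC : Continuous Finv := by
    let e : ℝ ≃o ℝ := StrictMono.orderIsoOfSurjective F hFmono hFbij.2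
    have he : Finv = ⇑e.symm := by
      funext x
      apply hFmono.injective
      rw [hFinv₂]
      exact (e.apply_symm_apply x).symm
    rw [he]
    exact e.symm.continuous
  -- continuity of H
  have hHc : Continuous H := by
    apply hHu.continuous
    exact Frequently.of_forall fun n => (hFinvC.iterate n).comp (hGcont.iterate n)
  -- monotonicity of H
  have hHmono : Monotone H := by
    intro x y hxy
    refine le_of_tendsto_of_tendsto' (hH x) (hH y) fun n => ?_
    exact ((Finv_strictMono hFmono hFinv₂).iterate n).monotone
      ((hGmono.iterate n).monotone hxy)
  -- periodicity
  have hHper : ∀ x, H (x + 1) = H x + 1 := by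
    intro x
    have t1 : Tendsto (fun n => Finv^[n] (G^[n] (x + 1))) atTop (nhds (H x + 1)) := by
      have : (fun n => Finv^[n] (G^[n] (x + 1)))
          = fun n => Finv^[n] (G^[n] x) + 1 := by
        funext n
        rw [iter_per hGper n x, iter_Finv_per hFper hFinv₁ hFinv₂ n]
      rw [this]
      exact (hH x).add_const 1
    exact tendsto_nhds_unique (hH (x + 1)) t1
  -- semiconjugacy
  have hconj : ∀ x, F (H x) = H (G x) := by
    intro x
    have t1 : Tendsto (fun n => Finv^[n + 1] (G^[n + 1] x)) atTop (nhds (H x)) :=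
      (hH x).comp (tendsto_add_atTop_nat 1)
    have t2 : Tendsto (fun n => F (Finv^[n + 1] (G^[n + 1] x))) atTop (nhds (F (H x))) :=
      (hFcont.tendsto _).comp t1
    have heq : (fun n => F (Finv^[n + 1] (G^[n + 1] x)))
        = fun n => Finv^[n] (G^[n] (G x)) := by
      funext n
      rw [Function.iterate_succ_apply' Finv, hFinv₂, Function.iterate_succ_apply G]
    rw [heq] at t2
    exact tendsto_nhds_unique t2 (hH (G x))
  -- H ∘ K = id
  have hHK : ∀ x, H (K x) = x := by
    intro x
    have hn : ∀ n, Finv^[n] (G^[n] (Ginv^[n] (F^[n] x))) = x := by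
      intro n
      have h1 : G^[n] (Ginv^[n] (F^[n] x)) = F^[n] x :=
        (Function.LeftInverse.iterate hGinv₂ n) (F^[n] x)
      rw [h1]
      exact (Function.LeftInverse.iterate hFinv₁ n) x
    have t1 : Tendsto (fun n => H (Ginv^[n] (F^[n] x))) atTop (nhds (H (K x))) :=
      (hHc.tendsto _).comp (hK x)
    have t2 : Tendsto (fun n => H (Ginv^[n] (F^[n] x))) atTop (nhds x) := by
      rw [Metric.tendsto_atTop]
      intro ε hε
      obtain ⟨N, hN⟩ := (Metric.tendstoUniformly_iff.mp hHu ε hε).exists_forall_of_atTop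
      refine ⟨N, fun n hn' => ?_⟩
      have := hN n hn' (Ginv^[n] (F^[n] x))
      rwa [hn n] at this
    exact tendsto_nhds_unique t1 t2
  have hKH : ∀ x, K (H x) = x := by
    intro x
    have hn : ∀ n, Ginv^[n] (F^[n] (Finv^[n] (G^[n] x))) = x := by
      intro n
      have h1 : F^[n] (Finv^[n] (G^[n] x)) = G^[n] x :=
        (Function.LeftInverse.iterate hFinv₂ n) (G^[n] x)
      rw [h1]
      exact (Function.LeftInverse.iterate hGinv₁ n) x
    have hKc : Continuous K := by
      apply hKu.continuous
      refine Frequently.of_forall fun n => ?_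
      have hGinvC : Continuous Ginv := by
        let e : ℝ ≃o ℝ := StrictMono.orderIsoOfSurjective G hGmono hGbij.2
        have he : Ginv = ⇑e.symm := by
          funext y
          apply hGmono.injective
          rw [hGinv₂]
          exact (e.apply_symm_apply y).symm
        rw [he]
        exact e.symm.continuous
      exact (hGinvC.iterate n).comp (hFcont.iterate n)
    have t1 : Tendsto (fun n => K (Finv^[n] (G^[n] x))) atTop (nhds (K (H x))) :=
      (hKc.tendsto _).comp (hH x)
    have t2 : Tendsto (fun n => K (Finv^[n] (G^[n] x))) atTop (nhds x) := by
      rw [Metric.tendsto_atTop]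
      intro ε hε
      obtain ⟨N, hN⟩ := (Metric.tendstoUniformly_iff.mp hKu ε hε).exists_forall_of_atTop
      refine ⟨N, fun n hn' => ?_⟩
      have := hN n hn' (Finv^[n] (G^[n] x))
      rwa [hn n] at this
    exact tendsto_nhds_unique t1 t2
  have hHbij : Function.Bijective H := by
    constructor
    · intro a b hab
      rw [← hKH a, hab, hKH b]
    · intro y
      exact ⟨K y, hHK y⟩
  exact ⟨H, hHc, hHmono.strictMono_of_injective hHbij.1, hHbij, hHper, hconj⟩
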